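/- Normal Form Lemma: Let (A, →₁) and (A, →₂) be abstract reduction systems and ∼ an equivalence relation on A such that (A, →₁ ∪ →₂) satisfies the ∼-unique normal form property and →₁ left commutes with →₂. Then whenever a →₂* b and a →₂* c for →₂-normal forms b and c, there exist (→₁ ∪ →₂)-normal forms d₁, d₂ with b →₁* d₁, c →₁* d₂ and d₁ ∼ d₂. -/

import Mathlib

private lemma nf2_preserved {A : Type*} {r₁ r₂ : A → A → Prop}
    (hlc : ∀ a b c : A, r₁ a b → r₂ b c → ∃ d : A, r₂ a d ∧ Relation.ReflTransGen r₁ d c)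
    {b x : A} (hb : ∀ y, ¬ r₂ b y) (h : Relation.ReflTransGen r₁ b x) :
    ∀ y, ¬ r₂ x y := by
  induction h with
  | refl => exact hb
  | tail _ hstep ih =>
    intro y hy
    obtain ⟨d, hd, _⟩ := hlc _ _ _ hstep hy
    exact ih _ hd

private lemma union_to_r1 {A : Type*} {r₁ r₂ : A → A → Prop}
    (hlc : ∀ a b c : A, r₁ a b → r₂ b c → ∃ d : A, r₂ a d ∧ Relation.ReflTransGen r₁ d c)
    {b d : A} (hb : ∀ y, ¬ r₂ b y)
    (h : Relation.ReflTransGen (fun x y => r₁ x y ∨ r₂ x y) b d) :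
    Relation.ReflTransGen r₁ b d := by
  induction h with
  | refl => exact .refl
  | tail _ hstep ih =>
    rcases hstep with h1 | h2
    · exact ih.tail h1
    · exact absurd h2 (nf2_preserved hlc hb ih _)

/-- Normal Form Lemma: if →₁ ∪ →₂ has the ∼-unique normal form property and →₁ left
commutes with →₂, then any two →₂-normal forms of an element reduce by →₁ alone to
∼-equivalent (→₁ ∪ →₂)-normal forms. -/
theorem normal_form_lemma {A : Type*} (r₁ r₂ : A → A → Prop) (sim : A → A → Prop)
    (hequiv : Equivalence sim)
    (hun : ∀ a : A,
      (∃ b : A, Relation.ReflTransGen (fun x y => r₁ x y ∨ r₂ x y) a b ∧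
        ∀ c : A, ¬ (r₁ b c ∨ r₂ b c)) ∧
      (∀ b c : A,
        (Relation.ReflTransGen (fun x y => r₁ x y ∨ r₂ x y) a b ∧ ∀ x : A, ¬ (r₁ b x ∨ r₂ b x)) →
        (Relation.ReflTransGen (fun x y => r₁ x y ∨ r₂ x y) a c ∧ ∀ x : A, ¬ (r₁ c x ∨ r₂ c x)) →
        sim b c))
    (hlc : ∀ a b c : A, r₁ a b → r₂ b c → ∃ d : A, r₂ a d ∧ Relation.ReflTransGen r₁ d c) :
    ∀ a b c : A,
      Relation.ReflTransGen r₂ a b → Relation.ReflTransGen r₂ a c →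
      (∀ x : A, ¬ r₂ b x) → (∀ x : A, ¬ r₂ c x) →
      ∃ d₁ d₂ : A,
        Relation.ReflTransGen r₁ b d₁ ∧ Relation.ReflTransGen r₁ c d₂ ∧
        (∀ x : A, ¬ (r₁ d₁ x ∨ r₂ d₁ x)) ∧ (∀ x : A, ¬ (r₁ d₂ x ∨ r₂ d₂ x)) ∧
        sim d₁ d₂ := by
  intro a b c hab hac hb hc
  obtain ⟨d₁, hbd₁, hd₁⟩ := (hun b).1
  obtain ⟨d₂, hcd₂, hd₂⟩ := (hun c).1
  have hbd₁' : Relation.ReflTransGen r₁ b d₁ := union_to_r1 hlc hb hbd₁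
  have hcd₂' : Relation.ReflTransGen r₁ c d₂ := union_to_r1 hlc hc hcd₂
  have hab' : Relation.ReflTransGen (fun x y => r₁ x y ∨ r₂ x y) a b :=
    Relation.ReflTransGen.mono (fun _ _ h => Or.inr h) _ _ hab
  have hac' : Relation.ReflTransGen (fun x y => r₁ x y ∨ r₂ x y) a c :=
    Relation.ReflTransGen.mono (fun _ _ h => Or.inr h) _ _ hac
  have hsim := (hun a).2 d₁ d₂ ⟨hab'.trans hbd₁, hd₁⟩ ⟨hac'.trans hcd₂, hd₂⟩
  exact ⟨d₁, d₂, hbd₁', hcd₂', hd₁, hd₂, hsim⟩
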